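/- arXiv:1308.4772 — 3 statements merged into one kernel-verified Lean document; each statement's English description precedes it below -/
import Mathlib

section
/- Let σ be a shift matrix of size (n+1)×(n+1). Then the span of the elements {e_{i,j} t^r | 1 ≤ i,j ≤ n+1, r ≥ s_{i,j}} is a Lie subalgebra of gl(1|n)[t]; i.e. it is closed under the supercommutator. -/
lemma tri_abs (a b c : ℤ) :
    |a - b| + |b - c| = |a - c| ∨ |b - a| + |a - c| = |b - c| ∨
      |a - c| + |c - b| = |a - b| := by
  rcases abs_cases (a - b) with ⟨e1, l1⟩ | ⟨e1, l1⟩ <;>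
  rcases abs_cases (b - c) with ⟨e2, l2⟩ | ⟨e2, l2⟩ <;>
  rcases abs_cases (a - c) with ⟨e3, l3⟩ | ⟨e3, l3⟩ <;>
  rcases abs_cases (b - a) with ⟨e4, l4⟩ | ⟨e4, l4⟩ <;>
  rcases abs_cases (c - b) with ⟨e5, l5⟩ | ⟨e5, l5⟩ <;>
  rw [e1, e2, e3, e4, e5] <;> omega

/-- For a shift matrix `σ`, the span of the elements `e_{i,j} t^r` with `r ≥ s_{i,j}`
is closed under the supercommutator of `gl(1|n)[t]`. -/
theorem stmt_5 (n : ℕ) (σ : Fin (n+1) → Fin (n+1) → ℕ)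
    (hshift : ∀ i j k : Fin (n+1),
      |((i : ℕ) : ℤ) - ((j : ℕ) : ℤ)| + |((j : ℕ) : ℤ) - ((k : ℕ) : ℤ)|
        = |((i : ℕ) : ℤ) - ((k : ℕ) : ℤ)| →
      σ i j + σ j k = σ i k) :
    let pa : Fin (n+1) → ℕ := fun x => if (x : ℕ) = 0 then 0 else 1
    let E : Fin (n+1) → Fin (n+1) → ℕ → Matrix (Fin (n+1)) (Fin (n+1)) (Polynomial ℂ) :=
      fun x y t => Matrix.single x y (Polynomial.X ^ t)
    let S : Submodule ℂ (Matrix (Fin (n+1)) (Fin (n+1)) (Polynomial ℂ)) :=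
      Submodule.span ℂ {x | ∃ i j r, σ i j ≤ r ∧ x = E i j r}
    ∀ (i j h k : Fin (n+1)) (r t : ℕ), σ i j ≤ r → σ h k ≤ t →
      E i j r * E h k t
        - ((-1 : Polynomial ℂ) ^ ((pa i + pa j) * (pa h + pa k))) • (E h k t * E i j r) ∈ S := by
  intro pa E S i j h k r t hr ht
  -- triangle inequality for the shift matrix
  have tri : ∀ a b c : Fin (n+1), σ a c ≤ σ a b + σ b c := by
    intro a b c
    rcases tri_abs ((a : ℕ) : ℤ) ((b : ℕ) : ℤ) ((c : ℕ) : ℤ) with h1 | h1 | h1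
    · exact (hshift a b c h1).ge
    · have := hshift b a c h1; omega
    · have := hshift a c b h1; omega
  have hE : ∀ (a b : Fin (n+1)) (c : ℕ), σ a b ≤ c → E a b c ∈ S := by
    intro a b c hc
    exact Submodule.subset_span ⟨a, b, c, hc, rfl⟩
  have hP1 : E i j r * E h k t ∈ S := by
    by_cases hjh : j = h
    · subst hjh
      have : E i j r * E j k t = E i k (r + t) := by
        simp only [E, Matrix.single_mul_single_same, pow_add]
      rw [this]
      exact hE i k (r + t) (le_trans (tri i j k) (add_le_add hr ht))
    · have : E i j r * E h k t = 0 := by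
        simp [E, Matrix.single_mul_single_of_ne, hjh]
      rw [this]; exact zero_mem S
  have hP2 : E h k t * E i j r ∈ S := by
    by_cases hki : k = i
    · subst hki
      have : E h k t * E k j r = E h j (t + r) := by
        simp only [E, Matrix.single_mul_single_same, pow_add]
      rw [this]
      exact hE h j (t + r) (le_trans (tri h k j) (add_le_add ht hr))
    · have : E h k t * E i j r = 0 := by
        simp [E, Matrix.single_mul_single_of_ne, hki]
      rw [this]; exact zero_mem S
  rcases Nat.even_or_odd ((pa i + pa j) * (pa h + pa k)) with he | ho
  · rw [he.neg_one_pow, one_smul]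
    exact sub_mem hP1 hP2
  · rw [ho.neg_one_pow, neg_one_smul, sub_neg_eq_add]
    exact add_mem hP1 hP2
end

section
/- With the Gauss decomposition notation of Lemma 3.5: if the block diagonal factor at position b of shape μ splits as ⁽μ⁾D_b = [[I_α,0],[C,I_β]]·[[A,0],[0,D]]·[[I_α,B],[0,I_β]] for the refined composition ν obtained by splitting μ_b = α + β, then the block Gauss decomposition of T(u) with respect to ν satisfies: ⁽ν⁾D_a = ⁽μ⁾D_a for a < b, ⁽ν⁾D_b = A, ⁽ν⁾D_{b+1} = D, and ⁽ν⁾D_c = ⁽μ⁾D_{c−1} for c > b+1. -/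
open Matrix Finset

section helpers

variable {n : ℕ} {S : Type*} [Ring S]

private lemma mul_apply_congr' {X Y X' Y' : Matrix (Fin (n+1)) (Fin (n+1)) S} {i j : Fin (n+1)}
    (h : ∀ k, X i k * Y k j = X' i k * Y' k j) : (X * Y) i j = (X' * Y') i j := by
  rw [Matrix.mul_apply, Matrix.mul_apply]
  exact Finset.sum_congr rfl fun k _ => h k

private lemma sut_pow' (N : Matrix (Fin (n+1)) (Fin (n+1)) S)
    (hN : ∀ i j : Fin (n+1), (j : ℕ) ≤ (i : ℕ) → N i j = 0) : N ^ (n+1) = 0 := by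
  have key : ∀ k, ∀ i j : Fin (n+1), (j : ℕ) < (i : ℕ) + k → (N ^ k) i j = 0 := by
    intro k
    induction k with
    | zero =>
      intro i j h
      rw [pow_zero]
      exact Matrix.one_apply_ne (by rintro rfl; omega)
    | succ k ih =>
      intro i j h
      rw [pow_succ, Matrix.mul_apply]
      refine Finset.sum_eq_zero fun l _ => ?_
      by_cases hl : (j : ℕ) ≤ (l : ℕ)
      · rw [hN l j hl, mul_zero]
      · rw [ih i l (by omega), zero_mul]
  ext i j
  rw [key (n+1) i j (by omega)]
  simp

private lemma slt_pow' (N : Matrix (Fin (n+1)) (Fin (n+1)) S)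
    (hN : ∀ i j : Fin (n+1), (i : ℕ) ≤ (j : ℕ) → N i j = 0) : N ^ (n+1) = 0 := by
  have key : ∀ k, ∀ i j : Fin (n+1), (i : ℕ) < (j : ℕ) + k → (N ^ k) i j = 0 := by
    intro k
    induction k with
    | zero =>
      intro i j h
      rw [pow_zero]
      exact Matrix.one_apply_ne (by rintro rfl; omega)
    | succ k ih =>
      intro i j h
      rw [pow_succ, Matrix.mul_apply]
      refine Finset.sum_eq_zero fun l _ => ?_
      by_cases hl : (l : ℕ) ≤ (j : ℕ)
      · rw [hN l j hl, mul_zero]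
      · rw [ih i l (by omega), zero_mul]
  ext i j
  rw [key (n+1) i j (by omega)]
  simp

variable (blk : Fin (n+1) → ℕ)

private lemma UU_mul' {X Y : Matrix (Fin (n+1)) (Fin (n+1)) S}
    (hX1 : ∀ i j, blk j < blk i → X i j = 0)
    (hX2 : ∀ i j, blk i = blk j → X i j = if i = j then 1 else 0)
    (hY1 : ∀ i j, blk j < blk i → Y i j = 0)
    (hY2 : ∀ i j, blk i = blk j → Y i j = if i = j then 1 else 0) :
    (∀ i j, blk j < blk i → (X * Y) i j = 0) ∧
    (∀ i j, blk i = blk j → (X * Y) i j = if i = j then 1 else 0) := by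
  constructor
  · intro i j h
    rw [Matrix.mul_apply]
    refine Finset.sum_eq_zero fun k _ => ?_
    rcases lt_or_ge (blk k) (blk i) with hk | hk
    · rw [hX1 i k hk, zero_mul]
    · rw [hY1 k j (lt_of_lt_of_le h hk), mul_zero]
  · intro i j h
    have e : (X * Y) i j = ((1 * 1 : Matrix (Fin (n+1)) (Fin (n+1)) S)) i j := by
      refine mul_apply_congr' fun k => ?_
      rcases lt_trichotomy (blk k) (blk i) with hk | hk | hk
      · rw [hX1 i k hk, Matrix.one_apply_ne (show i ≠ k by rintro rfl; omega),
          zero_mul, zero_mul]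
      · rw [hX2 i k hk.symm, hY2 k j (hk.trans h), Matrix.one_apply, Matrix.one_apply]
      · rw [hY1 k j (by omega), Matrix.one_apply_ne (show k ≠ j by rintro rfl; omega),
          mul_zero, mul_zero]
    rw [e, Matrix.one_mul, Matrix.one_apply]

private lemma LU_mul' {X Y : Matrix (Fin (n+1)) (Fin (n+1)) S}
    (hX1 : ∀ i j, blk i < blk j → X i j = 0)
    (hX2 : ∀ i j, blk i = blk j → X i j = if i = j then 1 else 0)
    (hY1 : ∀ i j, blk i < blk j → Y i j = 0)
    (hY2 : ∀ i j, blk i = blk j → Y i j = if i = j then 1 else 0) :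
    (∀ i j, blk i < blk j → (X * Y) i j = 0) ∧
    (∀ i j, blk i = blk j → (X * Y) i j = if i = j then 1 else 0) := by
  constructor
  · intro i j h
    rw [Matrix.mul_apply]
    refine Finset.sum_eq_zero fun k _ => ?_
    rcases lt_or_ge (blk i) (blk k) with hk | hk
    · rw [hX1 i k hk, zero_mul]
    · rw [hY1 k j (by omega), mul_zero]
  · intro i j h
    have e : (X * Y) i j = ((1 * 1 : Matrix (Fin (n+1)) (Fin (n+1)) S)) i j := by
      refine mul_apply_congr' fun k => ?_
      rcases lt_trichotomy (blk i) (blk k) with hk | hk | hk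
      · rw [hX1 i k hk, Matrix.one_apply_ne (show i ≠ k by rintro rfl; omega),
          zero_mul, zero_mul]
      · rw [hX2 i k hk, hY2 k j (by omega), Matrix.one_apply, Matrix.one_apply]
      · rw [hY1 k j (by omega), Matrix.one_apply_ne (show k ≠ j by rintro rfl; omega),
          mul_zero, mul_zero]
    rw [e, Matrix.one_mul, Matrix.one_apply]

private lemma UU_inv' (hmono : Monotone blk) {X : Matrix (Fin (n+1)) (Fin (n+1)) S}
    (hX1 : ∀ i j, blk j < blk i → X i j = 0)
    (hX2 : ∀ i j, blk i = blk j → X i j = if i = j then 1 else 0) :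
    ∃ Y : Matrix (Fin (n+1)) (Fin (n+1)) S,
      (∀ i j, blk j < blk i → Y i j = 0) ∧
      (∀ i j, blk i = blk j → Y i j = if i = j then 1 else 0) ∧
      X * Y = 1 ∧ Y * X = 1 := by
  set N : Matrix (Fin (n+1)) (Fin (n+1)) S := 1 - X with hNdef
  have hN : ∀ i j, blk j ≤ blk i → N i j = 0 := by
    intro i j h
    rcases eq_or_lt_of_le h with h' | h'
    · rw [hNdef, Matrix.sub_apply, hX2 i j h'.symm, Matrix.one_apply, sub_self]
    · rw [hNdef, Matrix.sub_apply, hX1 i j h',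
        Matrix.one_apply_ne (show i ≠ j by rintro rfl; omega), sub_zero]
  have hNpow : ∀ k i j, blk j ≤ blk i → (N ^ (k+1)) i j = 0 := by
    intro k
    induction k with
    | zero => intro i j h; rw [pow_one]; exact hN i j h
    | succ k ih =>
      intro i j h
      rw [pow_succ, Matrix.mul_apply]
      refine Finset.sum_eq_zero fun l _ => ?_
      rcases le_or_gt (blk j) (blk l) with hl | hl
      · rw [hN l j hl, mul_zero]
      · rw [ih i l (by omega), zero_mul]
  have hNnil : N ^ (n+1) = 0 :=
    sut_pow' N (fun i j hij => hN i j (hmono (Fin.le_def.mpr hij)))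
  have hXeq : X = 1 - N := by rw [hNdef, sub_sub_cancel]
  refine ⟨∑ k ∈ Finset.range (n+1), N ^ k, ?_, ?_, ?_, ?_⟩
  · intro i j h
    rw [Matrix.sum_apply]
    refine Finset.sum_eq_zero fun k _ => ?_
    cases k with
    | zero => rw [pow_zero]; exact Matrix.one_apply_ne (by rintro rfl; omega)
    | succ k => exact hNpow k i j (le_of_lt h)
  · intro i j h
    rw [Matrix.sum_apply]
    rw [Finset.sum_eq_single 0 (fun k _ hk => by
        cases k with
        | zero => exact absurd rfl hk
        | succ k => exact hNpow k i j h.ge)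
      (fun h0 => absurd (Finset.mem_range.mpr (by omega)) h0)]
    rw [pow_zero, Matrix.one_apply]
  · rw [hXeq, ← neg_sub N 1, neg_mul, mul_geom_sum, hNnil, zero_sub, neg_neg]
  · rw [hXeq, ← neg_sub N 1, mul_neg, geom_sum_mul, hNnil, zero_sub, neg_neg]

private lemma LU_inv' (hmono : Monotone blk) {X : Matrix (Fin (n+1)) (Fin (n+1)) S}
    (hX1 : ∀ i j, blk i < blk j → X i j = 0)
    (hX2 : ∀ i j, blk i = blk j → X i j = if i = j then 1 else 0) :
    ∃ Y : Matrix (Fin (n+1)) (Fin (n+1)) S,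
      (∀ i j, blk i < blk j → Y i j = 0) ∧
      (∀ i j, blk i = blk j → Y i j = if i = j then 1 else 0) ∧
      X * Y = 1 ∧ Y * X = 1 := by
  set N : Matrix (Fin (n+1)) (Fin (n+1)) S := 1 - X with hNdef
  have hN : ∀ i j, blk i ≤ blk j → N i j = 0 := by
    intro i j h
    rcases eq_or_lt_of_le h with h' | h'
    · rw [hNdef, Matrix.sub_apply, hX2 i j h', Matrix.one_apply, sub_self]
    · rw [hNdef, Matrix.sub_apply, hX1 i j h',
        Matrix.one_apply_ne (show i ≠ j by rintro rfl; omega), sub_zero]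
  have hNpow : ∀ k i j, blk i ≤ blk j → (N ^ (k+1)) i j = 0 := by
    intro k
    induction k with
    | zero => intro i j h; rw [pow_one]; exact hN i j h
    | succ k ih =>
      intro i j h
      rw [pow_succ, Matrix.mul_apply]
      refine Finset.sum_eq_zero fun l _ => ?_
      rcases le_or_gt (blk l) (blk j) with hl | hl
      · rw [hN l j hl, mul_zero]
      · rw [ih i l (by omega), zero_mul]
  have hNnil : N ^ (n+1) = 0 :=
    slt_pow' N (fun i j hij => hN i j (hmono (Fin.le_def.mpr hij)))
  have hXeq : X = 1 - N := by rw [hNdef, sub_sub_cancel]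
  refine ⟨∑ k ∈ Finset.range (n+1), N ^ k, ?_, ?_, ?_, ?_⟩
  · intro i j h
    rw [Matrix.sum_apply]
    refine Finset.sum_eq_zero fun k _ => ?_
    cases k with
    | zero => rw [pow_zero]; exact Matrix.one_apply_ne (by rintro rfl; omega)
    | succ k => exact hNpow k i j (le_of_lt h)
  · intro i j h
    rw [Matrix.sum_apply]
    rw [Finset.sum_eq_single 0 (fun k _ hk => by
        cases k with
        | zero => exact absurd rfl hk
        | succ k => exact hNpow k i j h.le)
      (fun h0 => absurd (Finset.mem_range.mpr (by omega)) h0)]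
    rw [pow_zero, Matrix.one_apply]
  · rw [hXeq, ← neg_sub N 1, neg_mul, mul_geom_sum, hNnil, zero_sub, neg_neg]
  · rw [hXeq, ← neg_sub N 1, mul_neg, geom_sum_mul, hNnil, zero_sub, neg_neg]

end helpers



/-- Refinement of a block Gauss decomposition (Lemma 3.5): splitting the `b`-th diagonal
block `⁽μ⁾D_b = [[I,0],[C,I]]·[[A,0],[0,D]]·[[I,B],[0,I]]` yields the diagonal factors of
the Gauss decomposition for the refined composition `ν`: the diagonal blocks away from
block `b` are unchanged (up to reindexing), while `⁽ν⁾D_b = A` and `⁽ν⁾D_{b+1} = D`. -/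
theorem stmt_14 (n : ℕ) (A : Type*) [Ring A] [Algebra ℂ A]
    (blkμ blkν : Fin (n+1) → ℕ) (b : ℕ)
    (hμmono : Monotone blkμ) (hνmono : Monotone blkν)
    (hlt : ∀ i, blkμ i < b → blkν i = blkμ i)
    (hgt : ∀ i, b < blkμ i → blkν i = blkμ i + 1)
    (heq : ∀ i, blkμ i = b → blkν i = b ∨ blkν i = b + 1)
    (T Fμ Dμ Eμ Fν Dν Eν L Δ U : Matrix (Fin (n+1)) (Fin (n+1)) (PowerSeries A))
    (hT : ∀ i j, PowerSeries.constantCoeff (T i j) = if i = j then 1 else 0)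
    (hFμ1 : ∀ i j, blkμ i < blkμ j → Fμ i j = 0)
    (hFμ2 : ∀ i j, blkμ i = blkμ j → Fμ i j = if i = j then 1 else 0)
    (hDμ : ∀ i j, blkμ i ≠ blkμ j → Dμ i j = 0)
    (hEμ1 : ∀ i j, blkμ j < blkμ i → Eμ i j = 0)
    (hEμ2 : ∀ i j, blkμ i = blkμ j → Eμ i j = if i = j then 1 else 0)
    (hdecμ : T = Fμ * Dμ * Eμ)
    (hFν1 : ∀ i j, blkν i < blkν j → Fν i j = 0)
    (hFν2 : ∀ i j, blkν i = blkν j → Fν i j = if i = j then 1 else 0)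
    (hDν : ∀ i j, blkν i ≠ blkν j → Dν i j = 0)
    (hEν1 : ∀ i j, blkν j < blkν i → Eν i j = 0)
    (hEν2 : ∀ i j, blkν i = blkν j → Eν i j = if i = j then 1 else 0)
    (hdecν : T = Fν * Dν * Eν)
    (hL1 : ∀ i j, ¬(blkμ i = b ∧ blkμ j = b) → L i j = if i = j then 1 else 0)
    (hL2 : ∀ i j, blkν i < blkν j → L i j = 0)
    (hL3 : ∀ i j, blkν i = blkν j → L i j = if i = j then 1 else 0)
    (hU1 : ∀ i j, ¬(blkμ i = b ∧ blkμ j = b) → U i j = if i = j then 1 else 0)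
    (hU2 : ∀ i j, blkν j < blkν i → U i j = 0)
    (hU3 : ∀ i j, blkν i = blkν j → U i j = if i = j then 1 else 0)
    (hΔ1 : ∀ i j, blkν i ≠ blkν j → Δ i j = 0)
    (hΔ2 : ∀ i j, ¬(blkμ i = b ∧ blkμ j = b) → Δ i j = if i = j then 1 else 0)
    (hfact : (Matrix.of fun i j =>
        if blkμ i = b ∧ blkμ j = b then Dμ i j else if i = j then 1 else 0) = L * Δ * U) :
    (∀ i j, blkμ i = blkμ j → blkμ i ≠ b → Dν i j = Dμ i j) ∧
    (∀ i j, blkμ i = b → blkμ j = b → blkν i = blkν j → Dν i j = Δ i j) := by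
  
  classical
  -- trichotomy description of ν-values in terms of μ-values
  have hcase : ∀ i, (blkμ i < b ∧ blkν i = blkμ i) ∨
      (blkμ i = b ∧ (blkν i = b ∨ blkν i = b + 1)) ∨
      (b < blkμ i ∧ blkν i = blkμ i + 1) := by
    intro i
    rcases lt_trichotomy (blkμ i) b with h | h | h
    · exact Or.inl ⟨h, hlt i h⟩
    · exact Or.inr (Or.inl ⟨h, heq i h⟩)
    · exact Or.inr (Or.inr ⟨h, hgt i h⟩)
  have keyEq : ∀ i j, blkν i = blkν j → blkμ i = blkμ j := by
    intro i j h
    rcases hcase i with ⟨h1, h2⟩ | ⟨h1, h2 | h2⟩ | ⟨h1, h2⟩ <;>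
      rcases hcase j with ⟨g1, g2⟩ | ⟨g1, g2 | g2⟩ | ⟨g1, g2⟩ <;> omega
  have keyLt : ∀ i j, blkμ i < blkμ j → blkν i < blkν j := by
    intro i j h
    rcases hcase i with ⟨h1, h2⟩ | ⟨h1, h2 | h2⟩ | ⟨h1, h2⟩ <;>
      rcases hcase j with ⟨g1, g2⟩ | ⟨g1, g2 | g2⟩ | ⟨g1, g2⟩ <;> omega
  have keyEqb : ∀ i j, blkμ i = blkμ j → blkμ i ≠ b → blkν i = blkν j := by
    intro i j h hb
    rcases hcase i with ⟨h1, h2⟩ | ⟨h1, h2 | h2⟩ | ⟨h1, h2⟩ <;>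
      rcases hcase j with ⟨g1, g2⟩ | ⟨g1, g2 | g2⟩ | ⟨g1, g2⟩ <;> omega
  -- ν-structure of Fμ and Eμ
  have hFμν1 : ∀ i j, blkν i < blkν j → Fμ i j = 0 := by
    intro i j h
    rcases lt_trichotomy (blkμ i) (blkμ j) with hm | hm | hm
    · exact hFμ1 i j hm
    · rw [hFμ2 i j hm, if_neg (show i ≠ j by rintro rfl; omega)]
    · exact absurd (keyLt j i hm) (by omega)
  have hFμν2 : ∀ i j, blkν i = blkν j → Fμ i j = if i = j then 1 else 0 :=
    fun i j h => hFμ2 i j (keyEq i j h)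
  have hEμν1 : ∀ i j, blkν j < blkν i → Eμ i j = 0 := by
    intro i j h
    rcases lt_trichotomy (blkμ j) (blkμ i) with hm | hm | hm
    · exact hEμ1 i j hm
    · rw [hEμ2 i j hm.symm, if_neg (show i ≠ j by rintro rfl; omega)]
    · exact absurd (keyLt i j hm) (by omega)
  have hEμν2 : ∀ i j, blkν i = blkν j → Eμ i j = if i = j then 1 else 0 :=
    fun i j h => hEμ2 i j (keyEq i j h)
  -- D' and R
  set D' : Matrix (Fin (n+1)) (Fin (n+1)) (PowerSeries A) :=
    Matrix.of (fun i j => if blkμ i = b ∧ blkμ j = b then Δ i j else Dμ i j) with hD'def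
  set Rm : Matrix (Fin (n+1)) (Fin (n+1)) (PowerSeries A) :=
    Matrix.of (fun i j => if blkμ i = b ∧ blkμ j = b then (if i = j then 1 else 0)
      else Dμ i j) with hRdef
  have hD'diag : ∀ i j, blkν i ≠ blkν j → D' i j = 0 := by
    intro i j h
    by_cases hr : blkμ i = b ∧ blkμ j = b
    · rw [hD'def, Matrix.of_apply, if_pos hr]; exact hΔ1 i j h
    · rw [hD'def, Matrix.of_apply, if_neg hr]
      refine hDμ i j fun hm => ?_
      exact h (keyEqb i j hm (fun hb => hr ⟨hb, hm ▸ hb⟩))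
  -- (a)  Δ * Rm = D'
  have haux : Δ * Rm = D' := by
    ext i j
    by_cases hj : blkμ j = b
    · have e : (Δ * Rm) i j = (Δ * (1 : Matrix (Fin (n+1)) (Fin (n+1)) (PowerSeries A))) i j := by
        refine mul_apply_congr' fun k => ?_
        by_cases hk : blkμ k = b
        · rw [hRdef, Matrix.of_apply, if_pos ⟨hk, hj⟩, Matrix.one_apply]
        · rw [hRdef, Matrix.of_apply, if_neg (fun hc => hk hc.1), hDμ k j (by omega),
            Matrix.one_apply_ne (show k ≠ j by rintro rfl; omega)]
      rw [e, Matrix.mul_one, hD'def, Matrix.of_apply]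
      by_cases hi : blkμ i = b
      · rw [if_pos ⟨hi, hj⟩]
      · rw [if_neg (fun hc => hi hc.1), hDμ i j (by omega),
          hΔ1 i j (fun hv => hi ((keyEq i j hv) ▸ hj))]
    · have e : (Δ * Rm) i j = ((1 : Matrix (Fin (n+1)) (Fin (n+1)) (PowerSeries A)) * Dμ) i j := by
        refine mul_apply_congr' fun k => ?_
        by_cases hk : blkμ k = b
        · rw [hRdef, Matrix.of_apply, if_neg (fun hc => hj hc.2), hDμ k j (by omega),
            mul_zero, mul_zero]
        · rw [hRdef, Matrix.of_apply, if_neg (fun hc => hk hc.1),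
            hΔ2 i k (fun hc => hk hc.2), Matrix.one_apply]
      rw [e, Matrix.one_mul, hD'def, Matrix.of_apply, if_neg (fun hc => hj hc.2)]
  -- (b)  U * Rm = Rm * U
  have hUR : U * Rm = Rm * U := by
    ext i j
    have hl : (U * Rm) i j = if blkμ j = b then U i j else Dμ i j := by
      by_cases hj : blkμ j = b
      · have e : (U * Rm) i j = (U * (1 : Matrix (Fin (n+1)) (Fin (n+1)) (PowerSeries A))) i j := by
          refine mul_apply_congr' fun k => ?_
          by_cases hk : blkμ k = b
          · rw [hRdef, Matrix.of_apply, if_pos ⟨hk, hj⟩, Matrix.one_apply]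
          · rw [hRdef, Matrix.of_apply, if_neg (fun hc => hk hc.1), hDμ k j (by omega),
              Matrix.one_apply_ne (show k ≠ j by rintro rfl; omega)]
        rw [e, Matrix.mul_one, if_pos hj]
      · have e : (U * Rm) i j = ((1 : Matrix (Fin (n+1)) (Fin (n+1)) (PowerSeries A)) * Dμ) i j := by
          refine mul_apply_congr' fun k => ?_
          by_cases hk : blkμ k = b
          · rw [hRdef, Matrix.of_apply, if_neg (fun hc => hj hc.2), hDμ k j (by omega),
              mul_zero, mul_zero]
          · rw [hRdef, Matrix.of_apply, if_neg (fun hc => hk hc.1),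
              hU1 i k (fun hc => hk hc.2), Matrix.one_apply]
        rw [e, Matrix.one_mul, if_neg hj]
    have hr : (Rm * U) i j = if blkμ i = b then U i j else Dμ i j := by
      by_cases hi : blkμ i = b
      · have e : (Rm * U) i j = ((1 : Matrix (Fin (n+1)) (Fin (n+1)) (PowerSeries A)) * U) i j := by
          refine mul_apply_congr' fun k => ?_
          by_cases hk : blkμ k = b
          · rw [hRdef, Matrix.of_apply, if_pos ⟨hi, hk⟩, Matrix.one_apply]
          · rw [hRdef, Matrix.of_apply, if_neg (fun hc => hk hc.2), hDμ i k (by omega),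
              Matrix.one_apply_ne (show i ≠ k by rintro rfl; omega)]
        rw [e, Matrix.one_mul, if_pos hi]
      · have e : (Rm * U) i j = (Dμ * (1 : Matrix (Fin (n+1)) (Fin (n+1)) (PowerSeries A))) i j := by
          refine mul_apply_congr' fun k => ?_
          by_cases hk : blkμ k = b
          · rw [hRdef, Matrix.of_apply, if_neg (fun hc => hi hc.1), hDμ i k (by omega),
              zero_mul, zero_mul]
          · rw [hRdef, Matrix.of_apply, if_neg (fun hc => hk hc.2),
              hU1 k j (fun hc => hk hc.1), Matrix.one_apply]
        rw [e, Matrix.mul_one, if_neg hi]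
    rw [hl, hr]
    by_cases hi : blkμ i = b <;> by_cases hj : blkμ j = b
    · rw [if_pos hi, if_pos hj]
    · rw [if_neg hj, if_pos hi, hDμ i j (by omega),
        hU1 i j (fun hc => hj hc.2), if_neg (show i ≠ j by rintro rfl; omega)]
    · rw [if_pos hj, if_neg hi, hDμ i j (by omega),
        hU1 i j (fun hc => hi hc.1), if_neg (show i ≠ j by rintro rfl; omega)]
    · rw [if_neg hi, if_neg hj]
  -- (c)  M * Rm = Dμ
  have hMR : (Matrix.of fun i j =>
      if blkμ i = b ∧ blkμ j = b then Dμ i j else if i = j then (1 : PowerSeries A) else 0)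
        * Rm = Dμ := by
    set Mm : Matrix (Fin (n+1)) (Fin (n+1)) (PowerSeries A) := Matrix.of fun i j =>
      if blkμ i = b ∧ blkμ j = b then Dμ i j else if i = j then (1 : PowerSeries A) else 0
      with hMdef
    ext i j
    by_cases hj : blkμ j = b
    · have e : (Mm * Rm) i j = (Mm * (1 : Matrix (Fin (n+1)) (Fin (n+1)) (PowerSeries A))) i j := by
        refine mul_apply_congr' fun k => ?_
        by_cases hk : blkμ k = b
        · rw [hRdef, Matrix.of_apply, if_pos ⟨hk, hj⟩, Matrix.one_apply]
        · rw [hRdef, Matrix.of_apply, if_neg (fun hc => hk hc.1), hDμ k j (by omega),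
            Matrix.one_apply_ne (show k ≠ j by rintro rfl; omega)]
      rw [e, Matrix.mul_one, hMdef, Matrix.of_apply]
      by_cases hi : blkμ i = b
      · rw [if_pos ⟨hi, hj⟩]
      · rw [if_neg (fun hc => hi hc.1), hDμ i j (by omega),
          if_neg (show i ≠ j by rintro rfl; omega)]
    · have e : (Mm * Rm) i j = ((1 : Matrix (Fin (n+1)) (Fin (n+1)) (PowerSeries A)) * Dμ) i j := by
        refine mul_apply_congr' fun k => ?_
        by_cases hk : blkμ k = b
        · rw [hRdef, Matrix.of_apply, if_neg (fun hc => hj hc.2), hDμ k j (by omega),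
            mul_zero, mul_zero]
        · rw [hRdef, Matrix.of_apply, if_neg (fun hc => hk hc.1), hMdef, Matrix.of_apply,
            if_neg (fun hc => hk hc.2), Matrix.one_apply]
      rw [e, Matrix.one_mul]
  -- Step A : L * D' * U = Dμ
  have hLDU : L * D' * U = Dμ := by
    calc L * D' * U = L * (Δ * Rm) * U := by rw [haux]
      _ = L * Δ * (Rm * U) := by rw [← mul_assoc L Δ Rm, mul_assoc (L * Δ) Rm U]
      _ = L * Δ * (U * Rm) := by rw [hUR]
      _ = (L * Δ * U) * Rm := by rw [mul_assoc (L * Δ) U Rm]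
      _ = Dμ := by rw [← hfact]; exact hMR
  -- Step B : the refined decomposition of T
  set F' : Matrix (Fin (n+1)) (Fin (n+1)) (PowerSeries A) := Fμ * L with hF'def
  set E' : Matrix (Fin (n+1)) (Fin (n+1)) (PowerSeries A) := U * Eμ with hE'def
  have hT' : Fν * Dν * Eν = F' * D' * E' := by
    rw [← hdecν, hdecμ, ← hLDU, hF'def, hE'def]
    simp only [mul_assoc]
  obtain ⟨hF'1, hF'2⟩ := LU_mul' blkν hFμν1 hFμν2 hL2 hL3
  obtain ⟨hE'1, hE'2⟩ := UU_mul' blkν hU2 hU3 hEμν1 hEμν2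
  obtain ⟨Fi, hFi1, hFi2, hFFi, hFiF⟩ := LU_inv' blkν hνmono hFν1 hFν2
  obtain ⟨Ei, hEi1, hEi2, hEEi, hEiE⟩ := UU_inv' blkν hνmono hE'1 hE'2
  obtain ⟨hX1, hX2⟩ := LU_mul' blkν hFi1 hFi2 hF'1 hF'2
  obtain ⟨hZ1, hZ2⟩ := UU_mul' blkν hEν1 hEν2 hEi1 hEi2
  -- extract  Dν * (Eν * Ei) = (Fi * F') * D'
  have e1 : Fi * (Fν * Dν * Eν) * Ei = Fi * (F' * D' * E') * Ei := by rw [hT']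
  simp only [← mul_assoc] at e1
  rw [hFiF, one_mul, mul_assoc (Fi * F' * D') E' Ei, hEEi, mul_one] at e1
  -- uniqueness on ν-diagonal blocks
  have huniq : ∀ i j, blkν i = blkν j → Dν i j = D' i j := by
    intro i j h
    have l1 : (Dν * (Eν * Ei)) i j = Dν i j := by
      have e : (Dν * (Eν * Ei)) i j
          = (Dν * (1 : Matrix (Fin (n+1)) (Fin (n+1)) (PowerSeries A))) i j := by
        refine mul_apply_congr' fun k => ?_
        by_cases hk : blkν k = blkν j
        · rw [hZ2 k j hk, Matrix.one_apply]
        · rw [hDν i k (by omega), zero_mul, zero_mul]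
      rw [e, Matrix.mul_one]
    have l2 : ((Fi * F') * D') i j = D' i j := by
      have e : ((Fi * F') * D') i j
          = ((1 : Matrix (Fin (n+1)) (Fin (n+1)) (PowerSeries A)) * D') i j := by
        refine mul_apply_congr' fun k => ?_
        by_cases hk : blkν k = blkν i
        · rw [hX2 i k hk.symm, Matrix.one_apply]
        · rw [hD'diag k j (by omega), mul_zero, mul_zero]
      rw [e, Matrix.one_mul]
    calc Dν i j = (Dν * (Eν * Ei)) i j := l1.symm
      _ = ((Fi * F') * D') i j := by rw [← mul_assoc, e1]
      _ = D' i j := l2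
  constructor
  · intro i j hm hb
    have h := huniq i j (keyEqb i j hm hb)
    rwa [hD'def, Matrix.of_apply, if_neg (fun hc => hb hc.1)] at h
  · intro i j hi hj hv
    have h := huniq i j hv
    rwa [hD'def, Matrix.of_apply, if_pos ⟨hi, hj⟩] at h
end

section
/- Let ε : U(gl_β) → ℂ be the counit-like homomorphism with ε(ẽ_{i,j}) = 0 for all i,j, and let Δ_R : Y(σ) → Y(σ̇) ⊗ U(gl_β) be the baby comultiplication of Theorem 4.2(1). Then the composition m ∘ (id ⊗ ε) ∘ Δ_R : Y(σ) → Y(σ̇) equals the natural inclusion Y(σ) ↪ Y(σ̇); in particular Δ_R is injective. -/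
open scoped TensorProduct

/-- The baby comultiplication `Δ_R : Y(σ) → Y(σ̇) ⊗ U(gl_β)` composed with
`m ∘ (id ⊗ ε)` equals the natural inclusion `Y(σ) ↪ Y(σ̇)`; in particular `Δ_R`
is injective. -/
theorem stmt_15 (m β : ℕ)
    (Y Yd U : Type) [Ring Y] [Algebra ℂ Y] [Ring Yd] [Algebra ℂ Yd] [Ring U] [Algebra ℂ U]
    (D : Fin (m+1) → ℕ → ℕ → ℕ → Y) (E F : Fin m → ℕ → ℕ → ℕ → Y)
    (Dd : Fin (m+1) → ℕ → ℕ → ℕ → Yd) (Ed Fd : Fin m → ℕ → ℕ → ℕ → Yd)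
    (et : ℕ → ℕ → U)
    (ε : U →ₐ[ℂ] ℂ) (hε : ∀ i j, ε (et i j) = 0)
    (ι : Y →ₐ[ℂ] Yd) (hιinj : Function.Injective ι)
    (hιD : ∀ a i j r, ι (D a i j r) = Dd a i j r)
    (hιE : ∀ a i j r, ι (E a i j r) = Ed a i j r)
    (hιF : ∀ a i j r, ι (F a i j r) = Fd a i j r)
    (ΔR : Y →ₐ[ℂ] Yd ⊗[ℂ] U)
    (hΔD : ∀ a i j r, ΔR (D a i j r) =
      Dd a i j r ⊗ₜ[ℂ] 1 -
        (if (a : ℕ) = m then ∑ k ∈ Finset.Icc 1 β, Dd a i k (r-1) ⊗ₜ[ℂ] et k j else 0))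
    (hΔE : ∀ a i j r, ΔR (E a i j r) =
      Ed a i j r ⊗ₜ[ℂ] 1 -
        (if (a : ℕ) + 1 = m then ∑ k ∈ Finset.Icc 1 β, Ed a i k (r-1) ⊗ₜ[ℂ] et k j else 0))
    (hΔF : ∀ a i j r, ΔR (F a i j r) = Fd a i j r ⊗ₜ[ℂ] 1)
    (hgen : Algebra.adjoin ℂ
      ({y | ∃ a i j r, y = D a i j r} ∪ {y | ∃ a i j r, y = E a i j r} ∪
        {y | ∃ a i j r, y = F a i j r}) = ⊤) :
    (∀ y : Y,
      (Algebra.TensorProduct.rid ℂ ℂ Yd)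
        ((Algebra.TensorProduct.map (AlgHom.id ℂ Yd) ε) (ΔR y)) = ι y) ∧
    Function.Injective ΔR := by
  have key : ∀ y : Y,
      (Algebra.TensorProduct.rid ℂ ℂ Yd)
        ((Algebra.TensorProduct.map (AlgHom.id ℂ Yd) ε) (ΔR y)) = ι y := by
    set Φ : Y →ₐ[ℂ] Yd :=
      ((Algebra.TensorProduct.rid ℂ ℂ Yd).toAlgHom.comp
        ((Algebra.TensorProduct.map (AlgHom.id ℂ Yd) ε).comp ΔR)) with hΦ
    have : Φ = ι := by
      have hle : Algebra.adjoin ℂ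
          ({y | ∃ a i j r, y = D a i j r} ∪ {y | ∃ a i j r, y = E a i j r} ∪
            {y | ∃ a i j r, y = F a i j r}) ≤ AlgHom.equalizer Φ ι := by
        apply Algebra.adjoin_le
        rintro y ((⟨a, i, j, r, rfl⟩ | ⟨a, i, j, r, rfl⟩) | ⟨a, i, j, r, rfl⟩) <;>
          rw [SetLike.mem_coe, AlgHom.mem_equalizer] <;>
          simp [ hΦ, hΔD, hΔE, hΔF, hιD, hιE, hιF, hε,
            Algebra.TensorProduct.rid_tmul, apply_ite, Finset.sum_ite_eq]
      rw [hgen] at hle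
      ext y
      exact hle (Algebra.mem_top (A := Y) (x := y))
    intro y
    have := congrArg (fun f : Y →ₐ[ℂ] Yd => f y) this
    simpa [hΦ] using this
  refine ⟨key, ?_⟩
  intro x y hxy
  apply hιinj
  rw [← key x, ← key y, hxy]
end
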